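/- (Progress / program evaluation) If a program decl* stmt* is well-formed (decl* ⊢ₛ Γ and Γ ⊢ stmt* ok), then there exists a unique store μ′ such that decl* stmt* ⇓ μ′, and dom(μ′) = dom(μ(Γ)). -/

import Mathlib

/-- Rounding up to the nearest multiple of `M`. -/
noncomputable def roundUp (M d : ℕ) : ℕ := sInf {m : ℕ | ∃ n : ℕ, m = n * M ∧ d ≤ m}

/-- Tensor types are tuples of naturals. -/
abbrev Ty := List ℕ
/-- Multi-indices. -/
abbrev Index := List ℕ

/-- `IdxLe i t`: the multi-index `i` (with components in {1,2,…}) is bounded by `t`. -/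
def IdxLe (i t : Index) : Prop :=
  i.length = t.length ∧ ∀ l, l < t.length → 1 ≤ i.getD l 0 ∧ i.getD l 0 ≤ t.getD l 0

/-- Swap the `m`-th and `n`-th components (1-based). -/
def swapIdx (t : List ℕ) (m n : ℕ) : List ℕ :=
  (t.set (m-1) (t.getD (n-1) 0)).set (n-1) (t.getD (m-1) 0)

/-- Delete the `m`-th and `n`-th components (1-based, `m < n`). -/
def delete2 (t : List ℕ) (m n : ℕ) : List ℕ :=
  (t.eraseIdx (n-1)).eraseIdx (m-1)

/-- Insert value `l` at the `m`-th and `n`-th positions (1-based, `m < n`). -/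
def insert2 (i : List ℕ) (m n l : ℕ) : List ℕ :=
  (i.insertIdx (m-1) l).insertIdx (n-1) l

/-- Pad a tensor type componentwise. -/
noncomputable def padT (M : ℕ) (t : Ty) : Ty := t.map (roundUp M)

/-- The padding region of a type: indices within the padded bounds but not the original ones. -/
def PadReg (M : ℕ) (t : Ty) (i : Index) : Prop := ¬ IdxLe i t ∧ IdxLe i (padT M t)

inductive Op | add | sub | mul | div
deriving DecidableEq

/-- Expressions of the tensor model language. -/
inductive Expr
| var : String → Expr
| paren : Expr → Expr
| binop : Op → Expr → Expr → Expr
| prod : Expr → Expr → Expr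
| trans : Expr → ℕ → ℕ → Expr
| contr : Expr → ℕ → ℕ → Expr

/-- A static context maps identifiers to tensor types. -/
abbrev Ctx := String → Option Ty

/-- Componentwise padding of a static context. -/
noncomputable def padCtx (M : ℕ) (Γ : Ctx) : Ctx := fun x => (Γ x).map (padT M)

/-- The typing rules of the tensor model language. -/
inductive HasTy (Γ : Ctx) : Expr → Ty → Prop
| var {x t} : Γ x = some t → HasTy Γ (.var x) t
| paren {e t} : HasTy Γ e t → HasTy Γ (.paren e) t
| prod {e₀ e₁ t₀ t₁} : HasTy Γ e₀ t₀ → HasTy Γ e₁ t₁ → HasTy Γ (.prod e₀ e₁) (t₀ ++ t₁)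
| trans {e t m n} : HasTy Γ e t → 1 ≤ m → m < n → n ≤ t.length →
    HasTy Γ (.trans e m n) (swapIdx t m n)
| contr {e t m n} : HasTy Γ e t → 1 ≤ m → m < n → n ≤ t.length →
    t.getD (m-1) 0 = t.getD (n-1) 0 → HasTy Γ (.contr e m n) (delete2 t m n)
| elem {op e₀ e₁ t} : HasTy Γ e₀ t → HasTy Γ e₁ t → HasTy Γ (.binop op e₀ e₁) t
| smul {e₀ e₁ t} : HasTy Γ e₀ [] → HasTy Γ e₁ t → HasTy Γ (.binop .mul e₀ e₁) t
| sdiv {e₀ e₁ t} : HasTy Γ e₀ t → HasTy Γ e₁ [] → HasTy Γ (.binop .div e₀ e₁) t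

/-- Syntax-directed type inference. -/
def inferTy (Γ : Ctx) : Expr → Option Ty
| .var x => Γ x
| .paren e => inferTy Γ e
| .prod e₀ e₁ => do pure ((← inferTy Γ e₀) ++ (← inferTy Γ e₁))
| .trans e m n => do
    let t ← inferTy Γ e
    if 1 ≤ m ∧ m < n ∧ n ≤ t.length then pure (swapIdx t m n) else none
| .contr e m n => do
    let t ← inferTy Γ e
    if 1 ≤ m ∧ m < n ∧ n ≤ t.length ∧ t.getD (m-1) 0 = t.getD (n-1) 0 then
      pure (delete2 t m n) else none
| .binop op e₀ e₁ => do
    let t₀ ← inferTy Γ e₀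
    let t₁ ← inferTy Γ e₁
    if t₀ = t₁ then pure t₀
    else if op = .mul ∧ t₀ = [] then pure t₁
    else if op = .div ∧ t₁ = [] then pure t₀
    else none

/-- The value domain `𝕍 ∪ {•}`: `none` is the undefined value `•`. -/
abbrev W (V : Type) := Option V

/-- Extended addition: `•` is absorbing. -/
def wadd {V : Type} [Add V] : W V → W V → W V
| some a, some b => some (a + b)
| _, _ => none

def wsub {V : Type} [Sub V] : W V → W V → W V
| some a, some b => some (a - b)
| _, _ => none

def wmul {V : Type} [Mul V] : W V → W V → W V
| some a, some b => some (a * b)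
| _, _ => none

/-- Controlled division on `𝕍 ∪ {•}`: `0/0 = 0`, `0/• = 0`, otherwise `•` absorbs
    and division by zero is undefined. -/
def wdiv {V : Type} [Field V] [DecidableEq V] : W V → W V → W V
| some a, some b => if b = 0 then (if a = 0 then some 0 else none) else some (a / b)
| some a, none => if a = 0 then some 0 else none
| none, _ => none

def applyOp {V : Type} [Field V] [DecidableEq V] : Op → W V → W V → W V
| .add => wadd
| .sub => wsub
| .mul => wmul
| .div => wdiv

/-- A dynamic store: a partial map from subscripted identifiers to `𝕍 ∪ {•}`. -/
abbrev Store (V : Type) := String × Index → Option (W V)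

/-- Denotational semantics of expression evaluation; `none` means evaluation is stuck
    (not well-defined), `some w` means the result is the value `w ∈ 𝕍 ∪ {•}`. -/
def eval {V : Type} [Field V] [DecidableEq V] (Γ : Ctx) (μ : Store V) :
    Expr → Index → Option (W V)
| .var x, i => μ (x, i)
| .paren e, i => eval Γ μ e i
| .prod e₀ e₁, i => do
    let t₀ ← inferTy Γ e₀
    let v₀ ← eval Γ μ e₀ (i.take t₀.length)
    let v₁ ← eval Γ μ e₁ (i.drop t₀.length)
    pure (wmul v₀ v₁)
| .trans e m n, i => eval Γ μ e (swapIdx i m n)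
| .contr e m n, i => do
    let t ← inferTy Γ e
    let vs ← (List.range (t.getD (m-1) 0)).mapM (fun l => eval Γ μ e (insert2 i m n (l+1)))
    pure (vs.foldl wadd (some 0))
| .binop op e₀ e₁, i => do
    let t₀ ← inferTy Γ e₀
    let t₁ ← inferTy Γ e₁
    if op = .mul ∧ t₀ = [] then
      let v₀ ← eval Γ μ e₀ []
      let v₁ ← eval Γ μ e₁ i
      pure (wmul v₀ v₁)
    else if op = .div ∧ t₁ = [] then
      let v₀ ← eval Γ μ e₀ i
      let v₁ ← eval Γ μ e₁ []
      pure (wdiv v₀ v₁)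
    else
      let v₀ ← eval Γ μ e₀ i
      let v₁ ← eval Γ μ e₁ i
      pure (applyOp op v₀ v₁)

open Classical

/-- The unique initial store determined by `Γ` and the ambient values `v`. -/
noncomputable def initStore {V : Type} (Γ : Ctx) (v : String → Index → W V) : Store V :=
  fun p => match Γ p.1 with
  | some t => if IdxLe p.2 t then some (v p.1 p.2) else none
  | none => none

/-- The unique padded initial store: values on the original domain, zero on padding. -/
noncomputable def initStoreP {V : Type} [Zero V] (M : ℕ) (Γ : Ctx)
    (v : String → Index → W V) : Store V :=
  fun p => match Γ p.1 with
  | some t =>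
      if IdxLe p.2 t then some (v p.1 p.2)
      else if IdxLe p.2 (padT M t) then some (some 0)
      else none
  | none => none

/-- A statement `x = e`. -/
abbrev Stmt := String × Expr

/-- Well-formedness of a statement list in context `Γ`. -/
def Ok (Γ : Ctx) (ss : List Stmt) : Prop :=
  ∀ s ∈ ss, ∃ t, Γ s.1 = some t ∧ HasTy Γ s.2 t

/-- Evaluation of a single assignment statement (rule ev-stmt). -/
inductive StepStmt {V : Type} [Field V] [DecidableEq V] (Γ : Ctx) :
    Store V → Stmt → Store V → Prop
| mk {μ : Store V} {x e t} :
    Γ x = some t →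
    (∀ i, IdxLe i t → μ (x, i) ≠ none) →
    (∀ i, IdxLe i t → (eval Γ μ e i).isSome) →
    StepStmt Γ μ (x, e)
      (fun p => if p.1 = x ∧ IdxLe p.2 t then eval Γ μ e p.2 else μ p)

/-- Evaluation of a statement sequence. -/
inductive StepStmts {V : Type} [Field V] [DecidableEq V] (Γ : Ctx) :
    Store V → List Stmt → Store V → Prop
| nil {μ} : StepStmts Γ μ [] μ
| cons {μ μ' μ'' s ss} : StepStmt Γ μ s μ' → StepStmts Γ μ' ss μ'' →
    StepStmts Γ μ (s :: ss) μ''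

/-- Evaluation of a single assignment statement with a padded store (rule ev-pad-stmt). -/
inductive StepStmtP {V : Type} [Field V] [DecidableEq V] (M : ℕ) (Γ : Ctx) :
    Store V → Stmt → Store V → Prop
| mk {μ : Store V} {x e t} :
    Γ x = some t →
    (∀ i, IdxLe i (padT M t) → μ (x, i) ≠ none) →
    (∀ i, IdxLe i (padT M t) → (eval (padCtx M Γ) μ e i).isSome) →
    StepStmtP M Γ μ (x, e)
      (fun p => if p.1 = x ∧ IdxLe p.2 (padT M t) then eval (padCtx M Γ) μ e p.2 else μ p)

inductive StepStmtsP {V : Type} [Field V] [DecidableEq V] (M : ℕ) (Γ : Ctx) :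
    Store V → List Stmt → Store V → Prop
| nil {μ} : StepStmtsP M Γ μ [] μ
| cons {μ μ' μ'' s ss} : StepStmtP M Γ μ s μ' → StepStmtsP M Γ μ' ss μ'' →
    StepStmtsP M Γ μ (s :: ss) μ''


section Helpers
open List

lemma getD_set_self' (l : List ℕ) {i : ℕ} (h : i < l.length) (a : ℕ) :
    (l.set i a).getD i 0 = a := by
  rw [List.getD_eq_getElem?_getD, List.getElem?_set_self h]; rfl

lemma getD_set_ne' (l : List ℕ) {i j : ℕ} (h : i ≠ j) (a : ℕ) :
    (l.set i a).getD j 0 = l.getD j 0 := by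
  rw [List.getD_eq_getElem?_getD, List.getElem?_set_ne h, ← List.getD_eq_getElem?_getD]

lemma length_swapIdx (t : List ℕ) (m n : ℕ) : (swapIdx t m n).length = t.length := by
  simp [swapIdx]

lemma getD_swapIdx {t : List ℕ} {m n : ℕ} (hm : 1 ≤ m) (hmn : m < n) (hn : n ≤ t.length)
    (l : ℕ) :
    (swapIdx t m n).getD l 0 =
      if l = n-1 then t.getD (m-1) 0 else if l = m-1 then t.getD (n-1) 0 else t.getD l 0 := by
  have ha : m - 1 < t.length := by omega
  unfold swapIdx
  split_ifs with h1 h2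
  · subst h1; rw [getD_set_self' _ (by simp; omega)]
  · subst h2; rw [getD_set_ne' _ (by omega), getD_set_self' _ ha]
  · rw [getD_set_ne' _ (by omega), getD_set_ne' _ (by omega)]

lemma IdxLe_swapIdx {i t : List ℕ} {m n : ℕ} (hm : 1 ≤ m) (hmn : m < n) (hn : n ≤ t.length)
    (h : IdxLe i (swapIdx t m n)) : IdxLe (swapIdx i m n) t := by
  obtain ⟨hlen, hb⟩ := h
  rw [length_swapIdx] at hlen
  have hn' : n ≤ i.length := by omega
  refine ⟨by rw [length_swapIdx]; exact hlen, fun l hl => ?_⟩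
  have hS : ∀ l, l < t.length → 1 ≤ i.getD l 0 ∧ i.getD l 0 ≤ (swapIdx t m n).getD l 0 :=
    fun l hl => hb l (by rwa [length_swapIdx])
  rw [getD_swapIdx hm hmn hn']
  split_ifs with h1 h2
  · have := hS (m-1) (by omega)
    rw [getD_swapIdx hm hmn hn, if_neg (by omega), if_pos rfl] at this
    subst h1; exact this
  · have := hS (n-1) (by omega)
    rw [getD_swapIdx hm hmn hn, if_pos rfl] at this
    subst h2; exact this
  · have := hS l hl
    rw [getD_swapIdx hm hmn hn, if_neg h1, if_neg h2] at this
    exact this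

lemma getD_eraseIdx' (l : List ℕ) (n k : ℕ) :
    (l.eraseIdx n).getD k 0 = if k < n then l.getD k 0 else l.getD (k+1) 0 := by
  simp only [List.getD_eq_getElem?_getD, List.getElem?_eraseIdx]
  split_ifs <;> rfl

lemma getD_insertIdx' (l : List ℕ) (x : ℕ) {n k : ℕ} (hn : n ≤ l.length) (hk : k ≤ l.length) :
    (l.insertIdx n x).getD k 0 =
      if k < n then l.getD k 0 else if k = n then x else l.getD (k-1) 0 := by
  induction n generalizing l k with
  | zero =>
      rcases k with _ | k'
      · simp [List.insertIdx_zero]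
      · simp [List.insertIdx_zero, List.getD_cons_succ]
  | succ n ih =>
      rcases l with _ | ⟨a, l'⟩
      · simp at hn
      · rcases k with _ | k'
        · simp [List.insertIdx_succ_cons]
        · rw [List.insertIdx_succ_cons]
          simp only [List.getD_cons_succ]
          rw [ih l' (by simpa using hn) (by simpa using hk)]
          by_cases hc : k' + 1 < n + 1
          · rw [if_pos hc, if_pos (by omega : k' < n)]
            try simp [List.getD_cons_succ]
          · rw [if_neg hc, if_neg (by omega : ¬ k' < n)]
            by_cases hc2 : k' + 1 = n + 1
            · rw [if_pos hc2, if_pos (by omega : k' = n)]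
            · rw [if_neg hc2, if_neg (by omega : ¬ k' = n)]
              obtain ⟨k'', rfl⟩ : ∃ k'', k' = k''+1 := ⟨k'-1, by omega⟩
              try simp [List.getD_cons_succ]

end Helpers
section Helpers2
open List

lemma getD_delete2 {t : List ℕ} {m n : ℕ} (hm : 1 ≤ m) (hmn : m < n) (l : ℕ) :
    (delete2 t m n).getD l 0 =
      if l < m-1 then t.getD l 0 else if l+1 < n-1 then t.getD (l+1) 0 else t.getD (l+2) 0 := by
  unfold delete2
  simp only [getD_eraseIdx']
  split_ifs <;> first | rfl | (exfalso; omega)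

lemma length_delete2 {t : List ℕ} {m n : ℕ} (hm : 1 ≤ m) (hmn : m < n) (hn : n ≤ t.length) :
    (delete2 t m n).length = t.length - 2 := by
  unfold delete2
  rw [List.length_eraseIdx, List.length_eraseIdx]
  split_ifs <;> omega

lemma length_insert2 {i : List ℕ} {m n v : ℕ} (hm : 1 ≤ m) (hmn : m < n)
    (hn : n ≤ i.length + 2) : (insert2 i m n v).length = i.length + 2 := by
  have hA : ((i.insertIdx (m-1) v)).length = i.length + 1 := by
    rw [List.length_insertIdx, if_pos (by omega)]
  unfold insert2
  rw [List.length_insertIdx, if_pos (by rw [hA]; omega), hA]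

lemma getD_insert2 {i : List ℕ} {m n v : ℕ} (hm : 1 ≤ m) (hmn : m < n)
    (hn : n ≤ i.length + 2) (l : ℕ) (hl : l ≤ i.length + 1) :
    (insert2 i m n v).getD l 0 =
      if l < m-1 then i.getD l 0 else if l = m-1 then v
      else if l < n-1 then i.getD (l-1) 0 else if l = n-1 then v else i.getD (l-2) 0 := by
  have hm' : m - 1 ≤ i.length := by omega
  have hA : ((i.insertIdx (m-1) v)).length = i.length + 1 := by
    rw [List.length_insertIdx, if_pos hm']
  unfold insert2
  rw [getD_insertIdx' _ _ (by rw [hA]; omega) (by rw [hA]; omega)]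
  by_cases h1 : l < n - 1
  · rw [if_pos h1, getD_insertIdx' _ _ hm' (by omega)]
    split_ifs <;> first | rfl | (exfalso; omega)
  · rw [if_neg h1]
    by_cases h2 : l = n - 1
    · rw [if_pos h2]
      split_ifs <;> first | rfl | (exfalso; omega)
    · rw [if_neg h2, getD_insertIdx' _ _ hm' (by omega)]
      split_ifs <;> first | rfl | (exfalso; omega)

lemma IdxLe_insert2 {i t : List ℕ} {m n v : ℕ} (hm : 1 ≤ m) (hmn : m < n) (hn : n ≤ t.length)
    (heq : t.getD (m-1) 0 = t.getD (n-1) 0) (hi : IdxLe i (delete2 t m n))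
    (hv1 : 1 ≤ v) (hv2 : v ≤ t.getD (m-1) 0) : IdxLe (insert2 i m n v) t := by
  obtain ⟨hlen, hb⟩ := hi
  have hdl : (delete2 t m n).length = t.length - 2 := length_delete2 hm hmn hn
  rw [hdl] at hlen
  have h2t : 2 ≤ t.length := by omega
  refine ⟨by rw [length_insert2 hm hmn (by omega)]; omega, fun l hl => ?_⟩
  rw [getD_insert2 hm hmn (by omega) l (by omega)]
  split_ifs with h1 h2 h3 h4
  · have := hb l (by rw [hdl]; omega)
    rwa [getD_delete2 hm hmn, if_pos h1] at this
  · exact ⟨hv1, h2 ▸ hv2⟩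
  · have := hb (l-1) (by rw [hdl]; omega)
    rw [getD_delete2 hm hmn, if_neg (by omega), if_pos (by omega),
      (by omega : l - 1 + 1 = l)] at this
    exact this
  · refine ⟨hv1, ?_⟩
    rw [h4, ← heq]
    exact hv2
  · have := hb (l-2) (by rw [hdl]; omega)
    rw [getD_delete2 hm hmn, if_neg (by omega), if_neg (by omega),
      (by omega : l - 2 + 2 = l)] at this
    exact this

lemma getD_take' (i : List ℕ) {k l : ℕ} (h : l < k) : (i.take k).getD l 0 = i.getD l 0 := by
  simp [List.getD_eq_getElem?_getD, List.getElem?_take, h]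

lemma getD_drop' (i : List ℕ) (k l : ℕ) : (i.drop k).getD l 0 = i.getD (k+l) 0 := by
  simp [List.getD_eq_getElem?_getD, List.getElem?_drop]

lemma getD_append_left' {t₀ t₁ : List ℕ} {l : ℕ} (h : l < t₀.length) :
    (t₀ ++ t₁).getD l 0 = t₀.getD l 0 := by
  simp [List.getD_eq_getElem?_getD, List.getElem?_append, h]

lemma getD_append_right' {t₀ t₁ : List ℕ} {l : ℕ} (h : ¬ l < t₀.length) :
    (t₀ ++ t₁).getD l 0 = t₁.getD (l - t₀.length) 0 := by
  simp [List.getD_eq_getElem?_getD, List.getElem?_append, h]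

lemma IdxLe_take {i t₀ t₁ : List ℕ} (h : IdxLe i (t₀ ++ t₁)) : IdxLe (i.take t₀.length) t₀ := by
  obtain ⟨hlen, hb⟩ := h
  rw [List.length_append] at hlen
  refine ⟨by simp [List.length_take]; omega, fun l hl => ?_⟩
  rw [getD_take' _ hl]
  have := hb l (by rw [List.length_append]; omega)
  rwa [getD_append_left' hl] at this

lemma IdxLe_drop {i t₀ t₁ : List ℕ} (h : IdxLe i (t₀ ++ t₁)) : IdxLe (i.drop t₀.length) t₁ := by
  obtain ⟨hlen, hb⟩ := h
  rw [List.length_append] at hlen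
  refine ⟨by simp [List.length_drop]; omega, fun l hl => ?_⟩
  rw [getD_drop']
  have := hb (t₀.length + l) (by rw [List.length_append]; omega)
  rwa [getD_append_right' (by omega), (by omega : t₀.length + l - t₀.length = l)] at this

lemma IdxLe_nil : IdxLe ([] : Index) [] := ⟨rfl, fun l hl => by simp at hl⟩

lemma isSome_mapM' {α β : Type} (f : α → Option β) (l : List α)
    (h : ∀ x ∈ l, (f x).isSome) : (l.mapM f).isSome := by
  induction l with
  | nil => rw [List.mapM_nil]; simp
  | cons a l ih =>
      obtain ⟨b, hb⟩ := Option.isSome_iff_exists.mp (h a (by simp))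
      obtain ⟨bs, hbs⟩ := Option.isSome_iff_exists.mp (ih (fun x hx => h x (by simp [hx])))
      have hbs' : List.mapM.loop f l [] = some bs := hbs
      rw [List.mapM_cons]
      simp [hb, hbs, hbs']

end Helpers2
section TypeInfer

lemma inferTy_of_hasTy {Γ : Ctx} {e : Expr} {t : Ty} (h : HasTy Γ e t) :
    inferTy Γ e = some t := by
  induction h with
  | var hx => simpa [inferTy]
  | paren _ ih => simpa [inferTy]
  | prod _ _ ih₀ ih₁ => simp [inferTy, ih₀, ih₁]
  | trans _ hm hmn hn ih => simp [inferTy, ih, hm, hmn, hn]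
  | contr _ hm hmn hn heq ih =>
      have heq' := heq
      simp only [List.getD_eq_getElem?_getD] at heq'
      simp [inferTy, ih, hm, hmn, hn, heq, heq']
  | elem _ _ ih₀ ih₁ => simp [inferTy, ih₀, ih₁]
  | smul _ _ ih₀ ih₁ =>
      simp only [inferTy, ih₀, ih₁, Option.bind_eq_bind, Option.bind_some]
      split_ifs with h1 h2 <;> simp_all
  | sdiv _ _ ih₀ ih₁ =>
      simp only [inferTy, ih₀, ih₁, Option.bind_eq_bind, Option.bind_some]
      split_ifs with h1 h2 <;> simp_all

end TypeInfer
section Progress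

lemma eval_isSome {V : Type} [Field V] [DecidableEq V] {Γ : Ctx} {μ : Store V}
    (hμ : ∀ x t i, Γ x = some t → IdxLe i t → μ (x, i) ≠ none)
    {e : Expr} {t : Ty} (h : HasTy Γ e t) : ∀ i, IdxLe i t → (eval Γ μ e i).isSome := by
  induction h with
  | @var x t hx =>
      intro i hi
      simpa [eval, Option.isSome_iff_ne_none] using hμ x t i hx hi
  | paren _ ih =>
      intro i hi
      simpa [eval] using ih i hi
  | @prod e₀ e₁ t₀ t₁ h₀ h₁ ih₀ ih₁ =>
      intro i hi
      obtain ⟨v₀, hv₀⟩ := Option.isSome_iff_exists.mp (ih₀ _ (IdxLe_take hi))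
      obtain ⟨v₁, hv₁⟩ := Option.isSome_iff_exists.mp (ih₁ _ (IdxLe_drop hi))
      simp [eval, inferTy_of_hasTy h₀, hv₀, hv₁]
  | @trans e t m n _ hm hmn hn ih =>
      intro i hi
      simpa [eval] using ih _ (IdxLe_swapIdx hm hmn hn hi)
  | @contr e t m n _ hm hmn hn heq ih =>
      intro i hi
      have hmap : ((List.range (t.getD (m-1) 0)).mapM
          (fun l => eval Γ μ e (insert2 i m n (l+1)))).isSome := by
        apply isSome_mapM'
        intro l hl
        rw [List.mem_range] at hl
        exact ih _ (IdxLe_insert2 hm hmn hn heq hi (by omega) (by omega))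
      obtain ⟨vs, hvs⟩ := Option.isSome_iff_exists.mp hmap
      simp only [List.getD_eq_getElem?_getD] at hvs
      have hvs' : List.mapM.loop (fun l => eval Γ μ e (insert2 i m n (l + 1)))
          (List.range (t[m - 1]?.getD 0)) [] = some vs := hvs
      simp [eval, inferTy_of_hasTy ‹HasTy Γ e t›, hvs, hvs']
  | @elem op e₀ e₁ t h₀ h₁ ih₀ ih₁ =>
      intro i hi
      by_cases hc1 : op = .mul ∧ t = []
      · obtain ⟨rfl, rfl⟩ := hc1
        obtain rfl : i = [] := List.length_eq_zero_iff.mp hi.1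
        obtain ⟨v₀, hv₀⟩ := Option.isSome_iff_exists.mp (ih₀ [] IdxLe_nil)
        obtain ⟨v₁, hv₁⟩ := Option.isSome_iff_exists.mp (ih₁ [] IdxLe_nil)
        simp [eval, inferTy_of_hasTy h₀, inferTy_of_hasTy h₁, hv₀, hv₁]
      · by_cases hc2 : op = .div ∧ t = []
        · obtain ⟨rfl, rfl⟩ := hc2
          obtain rfl : i = [] := List.length_eq_zero_iff.mp hi.1
          obtain ⟨v₀, hv₀⟩ := Option.isSome_iff_exists.mp (ih₀ [] IdxLe_nil)
          obtain ⟨v₁, hv₁⟩ := Option.isSome_iff_exists.mp (ih₁ [] IdxLe_nil)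
          simp [eval, inferTy_of_hasTy h₀, inferTy_of_hasTy h₁, hv₀, hv₁]
        · obtain ⟨v₀, hv₀⟩ := Option.isSome_iff_exists.mp (ih₀ i hi)
          obtain ⟨v₁, hv₁⟩ := Option.isSome_iff_exists.mp (ih₁ i hi)
          simp [eval, inferTy_of_hasTy h₀, inferTy_of_hasTy h₁, hv₀, hv₁, hc1, hc2]
  | @smul e₀ e₁ t h₀ h₁ ih₀ ih₁ =>
      intro i hi
      obtain ⟨v₀, hv₀⟩ := Option.isSome_iff_exists.mp (ih₀ [] IdxLe_nil)
      obtain ⟨v₁, hv₁⟩ := Option.isSome_iff_exists.mp (ih₁ i hi)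
      simp [eval, inferTy_of_hasTy h₀, inferTy_of_hasTy h₁, hv₀, hv₁]
  | @sdiv e₀ e₁ t h₀ h₁ ih₀ ih₁ =>
      intro i hi
      obtain ⟨v₀, hv₀⟩ := Option.isSome_iff_exists.mp (ih₀ i hi)
      obtain ⟨v₁, hv₁⟩ := Option.isSome_iff_exists.mp (ih₁ [] IdxLe_nil)
      simp [eval, inferTy_of_hasTy h₀, inferTy_of_hasTy h₁, hv₀, hv₁]

end Progress

section Main

lemma initStore_ne_none {V : Type} (Γ : Ctx) (v : String → Index → W V) (p : String × Index) :
    initStore Γ v p ≠ none ↔ ∃ t, Γ p.1 = some t ∧ IdxLe p.2 t := by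
  rcases h : Γ p.1 with _ | t <;> simp only [initStore, h]
  · simp
  · split_ifs with hi <;> simp [hi]

lemma stepStmt_det {V : Type} [Field V] [DecidableEq V] {Γ : Ctx} {μ μ₁ μ₂ : Store V} {s : Stmt}
    (h₁ : StepStmt Γ μ s μ₁) (h₂ : StepStmt Γ μ s μ₂) : μ₁ = μ₂ := by
  cases h₁ with
  | mk hx hd he =>
    cases h₂ with
    | mk hx' hd' he' =>
      obtain rfl := Option.some.inj (hx.symm.trans hx')
      rfl

lemma stepStmts_det {V : Type} [Field V] [DecidableEq V] {Γ : Ctx} {μ μ₁ μ₂ : Store V}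
    {ss : List Stmt} (h₁ : StepStmts Γ μ ss μ₁) (h₂ : StepStmts Γ μ ss μ₂) : μ₁ = μ₂ := by
  induction h₁ generalizing μ₂ with
  | nil => cases h₂; rfl
  | cons hs hss ih =>
      cases h₂ with
      | cons hs' hss' =>
        obtain rfl := stepStmt_det hs hs'
        exact ih hss'

lemma steps_exists {V : Type} [Field V] [DecidableEq V] {Γ : Ctx} (v : String → Index → W V)
    (ss : List Stmt) :
    ∀ {μ : Store V}, Ok Γ ss → (∀ p, μ p ≠ none ↔ initStore Γ v p ≠ none) →
    ∃ μ', StepStmts Γ μ ss μ' ∧ ∀ p, μ' p ≠ none ↔ initStore Γ v p ≠ none := by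
  induction ss with
  | nil => exact fun hok hD => ⟨_, .nil, hD⟩
  | cons s ss ih =>
      intro μ hok hD
      obtain ⟨x, e⟩ := s
      obtain ⟨t, hx, hty⟩ := hok _ List.mem_cons_self
      have hμ : ∀ y t' i, Γ y = some t' → IdxLe i t' → μ (y, i) ≠ none := fun y t' i h1 h2 =>
        (hD (y, i)).mpr ((initStore_ne_none Γ v (y, i)).mpr ⟨t', h1, h2⟩)
      have hev : ∀ i, IdxLe i t → (eval Γ μ e i).isSome :=
        fun i hi => eval_isSome hμ hty i hi
      have hd : ∀ i, IdxLe i t → μ (x, i) ≠ none := fun i hi => hμ x t i hx hi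
      have hstep : StepStmt Γ μ (x, e)
          (fun p => if p.1 = x ∧ IdxLe p.2 t then eval Γ μ e p.2 else μ p) :=
        StepStmt.mk hx hd hev
      have hD' : ∀ p, (fun p => if p.1 = x ∧ IdxLe p.2 t then eval Γ μ e p.2 else μ p) p ≠ none
          ↔ initStore Γ v p ≠ none := by
        intro p
        by_cases hp : p.1 = x ∧ IdxLe p.2 t
        · simp only [if_pos hp]
          have l : eval Γ μ e p.2 ≠ none := Option.isSome_iff_ne_none.mp (hev p.2 hp.2)
          have r : initStore Γ v p ≠ none :=
            (initStore_ne_none Γ v p).mpr ⟨t, hp.1 ▸ hx, hp.2⟩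
          simp [l, r]
        · simp only [if_neg hp]
          exact hD p
      obtain ⟨μ'', hss, hD''⟩ := ih (fun s' hs' => hok s' (List.mem_cons_of_mem _ hs')) hD'
      exact ⟨μ'', .cons hstep hss, hD''⟩

end Main


/-- **Progress / program evaluation**: a well-formed program has a unique final
store `μ'`, and `dom μ' = dom μ(Γ)`. -/
theorem program_evaluation (V : Type) [Field V] [DecidableEq V] (Γ : Ctx)
    (v : String → Index → W V) (ss : List Stmt) (hok : Ok Γ ss) :
    ∃! μ' : Store V, StepStmts Γ (initStore Γ v) ss μ' ∧
      ∀ p, (μ' p ≠ none ↔ initStore Γ v p ≠ none) := by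
  obtain ⟨μ', hstep, hD⟩ := steps_exists v ss hok (fun p => Iff.rfl)
  refine ⟨μ', ⟨hstep, hD⟩, ?_⟩
  rintro μ'' ⟨h1, -⟩
  exact stepStmts_det h1 hstep
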